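/- Let (X,p) be a TVS-cone metric space over E with cone P, equipped with the cone metric topology τ_p. Then (X, τ_p) is compact if and only if it is sequentially compact, i.e., every sequence in X has a subsequence that cone-converges to some point of X. -/

import Mathlib

open Filter Topology

section Defs

variable {E : Type*} [AddCommGroup E] [Module ℝ E] [TopologicalSpace E]

/-- `P` is a closed, pointed convex cone with nonempty interior in the TVS `E`. -/
structure IsTVSCone (P : Set E) : Prop where
  add_mem : ∀ ⦃a⦄, a ∈ P → ∀ ⦃b⦄, b ∈ P → a + b ∈ P
  smul_mem : ∀ (r : ℝ), 0 ≤ r → ∀ ⦃a⦄, a ∈ P → r • a ∈ P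
  pointed : ∀ a, a ∈ P → -a ∈ P → a = 0
  isClosed : IsClosed P
  int_nonempty : (interior P).Nonempty

/-- `a ≤ b` with respect to the cone `P`. -/
def ConeLe (P : Set E) (a b : E) : Prop := b - a ∈ P

/-- `a ≪ b` with respect to the cone `P`. -/
def ConeLt (P : Set E) (a b : E) : Prop := b - a ∈ interior P

/-- `p : X × X → E` is a TVS-cone metric over the cone `P`. -/
structure IsConeMetric (P : Set E) {X : Type*} (p : X → X → E) : Prop where
  nonneg : ∀ x y, ConeLe P 0 (p x y)
  eq_zero_iff : ∀ x y, p x y = 0 ↔ x = y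
  symm : ∀ x y, p x y = p y x
  triangle : ∀ x y z, ConeLe P (p x y) (p x z + p z y)

/-- The sequence `x` cone-converges to `a`. -/
def ConeConverges (P : Set E) {X : Type*} (p : X → X → E) (x : ℕ → X) (a : X) : Prop :=
  ∀ c, c ∈ interior P → ∃ N, ∀ n ≥ N, ConeLt P (p (x n) a) c

/-- The sequence `x` is cone-Cauchy. -/
def ConeCauchy (P : Set E) {X : Type*} (p : X → X → E) (x : ℕ → X) : Prop :=
  ∀ c, c ∈ interior P → ∃ N, ∀ n ≥ N, ∀ m ≥ N, ConeLt P (p (x n) (x m)) c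

/-- `(X, p)` is cone-complete. -/
def ConeComplete (P : Set E) {X : Type*} (p : X → X → E) : Prop :=
  ∀ x : ℕ → X, ConeCauchy P p x → ∃ a, ConeConverges P p x a

/-- The nonlinear scalarization ξ_e(y) = inf {t : t • e - y ∈ P}. -/
noncomputable def xiScal (P : Set E) (e y : E) : ℝ := sInf {t : ℝ | t • e - y ∈ P}

/-- The open ball `B(x, c) = {y : p x y ≪ c}`. -/
def coneBall (P : Set E) {X : Type*} (p : X → X → E) (x : X) (c : E) : Set X :=
  {y | ConeLt P (p x y) c}

/-- The cone metric topology `τ_p`, generated by the balls `B(x,c)`, `c ≫ 0`. -/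
def coneTopology (P : Set E) {X : Type*} (p : X → X → E) : TopologicalSpace X :=
  TopologicalSpace.generateFrom {s | ∃ x c, c ∈ interior P ∧ s = coneBall P p x c}

end Defs

open Pointwise

set_option linter.unusedSectionVars false

section Lemmas

variable {E : Type*} [AddCommGroup E] [Module ℝ E] [TopologicalSpace E]
  [IsTopologicalAddGroup E] [ContinuousSMul ℝ E] {P : Set E}

/-- interior P + P ⊆ interior P -/
lemma int_add_mem (hP : IsTVSCone P) {a b : E} (ha : a ∈ interior P) (hb : b ∈ P) :
    a + b ∈ interior P := by
  have hopen : IsOpen ((· + b) '' interior P) :=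
    (Homeomorph.addRight b).isOpenMap _ isOpen_interior
  have hsub : (· + b) '' interior P ⊆ P := by
    rintro _ ⟨x, hx, rfl⟩
    exact hP.add_mem (interior_subset hx) hb
  exact interior_maximal hsub hopen ⟨a, ha, rfl⟩

lemma smul_int_mem (hP : IsTVSCone P) {r : ℝ} (hr : 0 < r) {a : E} (ha : a ∈ interior P) :
    r • a ∈ interior P := by
  have h1 : r • a ∈ interior (r • P) := by
    rw [interior_smul₀ (ne_of_gt hr) P]
    exact Set.smul_mem_smul_set ha
  refine interior_mono ?_ h1
  rintro _ ⟨x, hx, rfl⟩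
  exact hP.smul_mem r hr.le hx

/-- for c in interior P, some small multiple of e can be subtracted -/
lemma exists_delta (hP : IsTVSCone P) {c e : E} (hc : c ∈ interior P) :
    ∃ δ : ℝ, 0 < δ ∧ c - δ • e ∈ interior P := by
  have hcont : Continuous fun t : ℝ => c - t • e := by continuity
  have h0 : (fun t : ℝ => c - t • e) 0 ∈ interior P := by simpa using hc
  have hev : ∀ᶠ t in 𝓝 (0:ℝ), c - t • e ∈ interior P :=
    hcont.continuousAt.eventually_mem (isOpen_interior.mem_nhds h0)
  have hev' : ∀ᶠ t in 𝓝[>] (0:ℝ), c - t • e ∈ interior P :=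
    hev.filter_mono nhdsWithin_le_nhds
  obtain ⟨δ, h1, h2⟩ := (hev'.and self_mem_nhdsWithin).exists
  exact ⟨δ, h2, h1⟩

/-- the set defining xiScal is nonempty -/
lemma xi_set_nonempty (hP : IsTVSCone P) {e : E} (he : e ∈ interior P) (y : E) :
    {t : ℝ | t • e - y ∈ P}.Nonempty := by
  have hcont : Continuous fun t : ℝ => e - t • y := by continuity
  have h0 : (fun t : ℝ => e - t • y) 0 ∈ interior P := by simpa using he
  have hev : ∀ᶠ t in 𝓝 (0:ℝ), e - t • y ∈ interior P :=
    hcont.continuousAt.eventually_mem (isOpen_interior.mem_nhds h0)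
  have hev' : ∀ᶠ t in 𝓝[>] (0:ℝ), e - t • y ∈ interior P :=
    hev.filter_mono nhdsWithin_le_nhds
  obtain ⟨t, h1, h2⟩ := (hev'.and self_mem_nhdsWithin).exists
  refine ⟨t⁻¹, ?_⟩
  have h3 : t⁻¹ • (e - t • y) ∈ P :=
    hP.smul_mem t⁻¹ (by positivity) (interior_subset h1)
  have ht : (t:ℝ) ≠ 0 := ne_of_gt h2
  simpa [smul_sub, smul_smul, inv_mul_cancel₀ ht] using h3

lemma xi_set_bdd (hP : IsTVSCone P) {e : E} (he : e ∈ interior P) (h0 : (0:E) ∉ interior P)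
    {y : E} (hy : y ∈ P) : {t : ℝ | t • e - y ∈ P} ⊆ Set.Ici (0:ℝ) := by
  intro t ht
  by_contra hlt
  rw [Set.mem_Ici, not_le] at hlt
  have h1 : t • e ∈ P := by
    have := hP.add_mem ht hy
    simpa using this
  have h2 : -(t • e) ∈ P := by
    have : (-t) • e ∈ P := hP.smul_mem (-t) (by linarith) (interior_subset he)
    simpa [neg_smul] using this
  have h3 : t • e = 0 := hP.pointed _ h1 h2
  have he0 : e = 0 := by
    have := congrArg (fun z => t⁻¹ • z) h3
    simpa [smul_smul, inv_mul_cancel₀ (ne_of_lt hlt), smul_zero] using this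
  rw [he0] at he
  exact h0 (by simpa using he)

lemma xi_nonneg (hP : IsTVSCone P) {e : E} (he : e ∈ interior P) (h0 : (0:E) ∉ interior P)
    {y : E} (hy : y ∈ P) : 0 ≤ xiScal P e y :=
  le_csInf (xi_set_nonempty hP he y) fun _ ht => xi_set_bdd hP he h0 hy ht

lemma xi_lt_iff (hP : IsTVSCone P) {e : E} (he : e ∈ interior P) (h0 : (0:E) ∉ interior P)
    {y : E} (hy : y ∈ P) (t : ℝ) : xiScal P e y < t ↔ t • e - y ∈ interior P := by
  have hbdd : BddBelow {s : ℝ | s • e - y ∈ P} := ⟨0, fun s hs => xi_set_bdd hP he h0 hy hs⟩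
  constructor
  · intro hlt
    obtain ⟨s, hs, hst⟩ := exists_lt_of_csInf_lt (xi_set_nonempty hP he y) hlt
    have h1 : (t - s) • e ∈ interior P := smul_int_mem hP (by linarith) he
    have h2 : (t - s) • e + (s • e - y) ∈ interior P := int_add_mem hP h1 hs
    have h3 : (t - s) • e + (s • e - y) = t • e - y := by
      rw [sub_smul]; abel
    rwa [h3] at h2
  · intro hmem
    obtain ⟨δ, hδ, hδmem⟩ := exists_delta hP (e := e) hmem
    have h1 : (t - δ) • e - y ∈ P := by
      have : (t • e - y) - δ • e = (t - δ) • e - y := by rw [sub_smul]; abel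
      rw [← this]
      exact interior_subset hδmem
    calc xiScal P e y ≤ t - δ := csInf_le hbdd h1
    _ < t := by linarith

lemma xi_zero (hP : IsTVSCone P) {e : E} (he : e ∈ interior P) (h0 : (0:E) ∉ interior P) :
    xiScal P e 0 = 0 := by
  have hset : {t : ℝ | t • e - 0 ∈ P} = Set.Ici (0:ℝ) := by
    apply Set.Subset.antisymm
    · exact fun t ht => xi_set_bdd hP he h0 (by simpa using hP.smul_mem 0 le_rfl (interior_subset he)) ht
    · intro t ht
      simpa using hP.smul_mem t ht (interior_subset he)
  unfold xiScal
  rw [hset, csInf_Ici]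

lemma xi_eq_zero_imp (hP : IsTVSCone P) {e : E} (he : e ∈ interior P) (h0 : (0:E) ∉ interior P)
    {y : E} (hy : y ∈ P) (hxi : xiScal P e y = 0) : y = 0 := by
  -- every t > 0 is in the set
  have hall : ∀ t : ℝ, 0 < t → t • e - y ∈ P := by
    intro t ht
    have hlt : xiScal P e y < t := by rw [hxi]; exact ht
    exact interior_subset ((xi_lt_iff hP he h0 hy t).mp hlt)
  -- limit as t → 0⁺
  have hcont : Continuous fun t : ℝ => t • e - y := by continuity
  have htend : Tendsto (fun t : ℝ => t • e - y) (𝓝[>] 0) (𝓝 (-y)) := by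
    have : Tendsto (fun t : ℝ => t • e - y) (𝓝 0) (𝓝 (-y)) := by
      have h := hcont.tendsto (0:ℝ)
      simpa [zero_smul, zero_sub] using h
    exact this.mono_left nhdsWithin_le_nhds
  have hmem : -y ∈ P := by
    refine hP.isClosed.mem_of_tendsto htend ?_
    filter_upwards [self_mem_nhdsWithin] with t ht
    exact hall t ht
  exact hP.pointed _ hy hmem

end Lemmas

section More

variable {E : Type*} [AddCommGroup E] [Module ℝ E] [TopologicalSpace E]
  [IsTopologicalAddGroup E] [ContinuousSMul ℝ E] {P : Set E}

theorem stmt_9' {X : Type*} [Nonempty X]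
    (hP : IsTVSCone P) (p : X → X → E) (hp : IsConeMetric P p) :
    @CompactSpace X (coneTopology P p) ↔
      ∀ u : ℕ → X, ∃ a : X, ∃ φ : ℕ → ℕ, StrictMono φ ∧ ConeConverges P p (u ∘ φ) a := by
  by_cases hdeg : (0:E) ∈ interior P
  · -- degenerate case: E is subsingleton, hence X is a subsingleton
    have hPall : ∀ y : E, y ∈ P := by
      intro y
      have hcont : Continuous fun t : ℝ => t • y := by continuity
      have h0 : (fun t : ℝ => t • y) 0 ∈ interior P := by simpa using hdeg
      have hev : ∀ᶠ t in 𝓝 (0:ℝ), t • y ∈ interior P :=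
        hcont.continuousAt.eventually_mem (isOpen_interior.mem_nhds h0)
      have hev' : ∀ᶠ t in 𝓝[>] (0:ℝ), t • y ∈ interior P :=
        hev.filter_mono nhdsWithin_le_nhds
      obtain ⟨t, h1, h2⟩ := (hev'.and self_mem_nhdsWithin).exists
      have h3 := hP.smul_mem t⁻¹ (by positivity) (interior_subset h1)
      simpa [smul_smul, inv_mul_cancel₀ (ne_of_gt h2)] using h3
    have hE : ∀ y : E, y = 0 := fun y => hP.pointed y (hPall y) (hPall (-y))
    have hX : ∀ x y : X, x = y := fun x y => (hp.eq_zero_iff x y).mp (hE _)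
    constructor
    · intro _ u
      refine ⟨u 0, id, strictMono_id, fun c hc => ⟨0, fun n _ => ?_⟩⟩
      show c - p ((u ∘ id) n) (u 0) ∈ interior P
      have h : c - p ((u ∘ id) n) (u 0) = c := by rw [hE (p _ _), sub_zero]
      rw [h]; exact hc
    · intro _
      haveI : Subsingleton X := ⟨hX⟩
      haveI : Finite X := Finite.of_subsingleton
      exact @Finite.compactSpace X (coneTopology P p) _
  · -- nondegenerate case: build an honest metric
    obtain ⟨e, he⟩ := hP.int_nonempty
    letI τ : TopologicalSpace X := coneTopology P p
    set d : X → X → ℝ := fun x y => xiScal P e (p x y) with hd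
    have hmemP : ∀ x y, p x y ∈ P := fun x y => by
      have h := hp.nonneg x y; simpa [ConeLe] using h
    have hlt : ∀ x y (t : ℝ), d x y < t ↔ t • e - p x y ∈ interior P :=
      fun x y t => xi_lt_iff hP he hdeg (hmemP x y) t
    have hself : ∀ x, d x x = 0 := by
      intro x
      have h : p x x = 0 := (hp.eq_zero_iff x x).mpr rfl
      show xiScal P e (p x x) = 0
      rw [h]; exact xi_zero hP he hdeg
    have hcomm : ∀ x y, d x y = d y x := by
      intro x y; show xiScal P e (p x y) = xiScal P e (p y x); rw [hp.symm]
    have htri : ∀ x y z, d x z ≤ d x y + d y z := by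
      intro x y z
      have key : ∀ s ∈ {s : ℝ | s • e - p x y ∈ P}, ∀ t ∈ {t : ℝ | t • e - p y z ∈ P},
          d x z ≤ s + t := by
        intro s hs t ht
        have hmem : (s + t) • e - p x z ∈ P := by
          have h1 : (s • e - p x y) + (t • e - p y z) + ((p x y + p y z) - p x z) ∈ P :=
            hP.add_mem (hP.add_mem hs ht) (hp.triangle x z y)
          have h2 : (s • e - p x y) + (t • e - p y z) + ((p x y + p y z) - p x z)
              = (s + t) • e - p x z := by rw [add_smul]; abel
          rwa [h2] at h1
        exact csInf_le ⟨0, fun r hr => xi_set_bdd hP he hdeg (hmemP x z) hr⟩ hmem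
      have h1 : ∀ t ∈ {t : ℝ | t • e - p y z ∈ P}, d x z - t ≤ d x y := by
        intro t ht
        refine le_csInf (xi_set_nonempty hP he _) fun s hs => ?_
        linarith [key s hs t ht]
      have h2 : d x z - d x y ≤ d y z := by
        refine le_csInf (xi_set_nonempty hP he _) fun t ht => ?_
        linarith [h1 t ht]
      linarith
    have heq : ∀ x y, d x y = 0 → x = y := by
      intro x y h
      exact (hp.eq_zero_iff x y).mp (xi_eq_zero_imp hP he hdeg (hmemP x y) h)
    have H : ∀ s : Set X, IsOpen[τ] s ↔ ∀ x ∈ s, ∃ ε > 0, ∀ y, d x y < ε → y ∈ s := by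
      intro s
      constructor
      · intro hs
        induction hs with
        | basic u hu =>
          obtain ⟨x0, c, hc, rfl⟩ := hu
          intro y hy
          have hy' : c - p x0 y ∈ interior P := hy
          obtain ⟨δ, hδpos, hδ⟩ := exists_delta hP (e := e) hy'
          refine ⟨δ, hδpos, fun z hz => ?_⟩
          have hz' : δ • e - p y z ∈ interior P := (hlt y z δ).mp hz
          show c - p x0 z ∈ interior P
          have h1 : ((c - p x0 y) - δ • e) + (δ • e - p y z) + ((p x0 y + p y z) - p x0 z)
              ∈ interior P :=
            int_add_mem hP (int_add_mem hP hδ (interior_subset hz')) (hp.triangle x0 z y)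
          have h2 : ((c - p x0 y) - δ • e) + (δ • e - p y z) + ((p x0 y + p y z) - p x0 z)
              = c - p x0 z := by abel
          rwa [h2] at h1
        | univ => exact fun x _ => ⟨1, one_pos, fun _ _ => trivial⟩
        | inter u v _ _ ihu ihv =>
          intro x hx
          obtain ⟨ε₁, hε₁, h1⟩ := ihu x hx.1
          obtain ⟨ε₂, hε₂, h2⟩ := ihv x hx.2
          exact ⟨min ε₁ ε₂, lt_min hε₁ hε₂, fun y hy =>
            ⟨h1 y (lt_of_lt_of_le hy (min_le_left _ _)),
             h2 y (lt_of_lt_of_le hy (min_le_right _ _))⟩⟩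
        | sUnion S _ ih =>
          intro x hx
          obtain ⟨u, hu, hxu⟩ := hx
          obtain ⟨ε, hε, h⟩ := ih u hu x hxu
          exact ⟨ε, hε, fun y hy => ⟨u, hu, h y hy⟩⟩
      · intro hcrit
        choose ε hpos hball using hcrit
        have hs : s = ⋃ x, ⋃ hx : x ∈ s, coneBall P p x (ε x hx • e) := by
          ext y
          constructor
          · intro hy
            refine Set.mem_iUnion.2 ⟨y, Set.mem_iUnion.2 ⟨hy, ?_⟩⟩
            show ε y hy • e - p y y ∈ interior P
            rw [(hp.eq_zero_iff y y).mpr rfl, sub_zero]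
            exact smul_int_mem hP (hpos y hy) he
          · intro hy
            obtain ⟨x, hmem⟩ := Set.mem_iUnion.1 hy
            obtain ⟨hx, hmem'⟩ := Set.mem_iUnion.1 hmem
            exact hball x hx y ((hlt x y _).mpr hmem')
        rw [hs]
        refine isOpen_iUnion fun x => isOpen_iUnion fun hx => ?_
        exact TopologicalSpace.GenerateOpen.basic _
          ⟨x, ε x hx • e, smul_int_mem hP (hpos x hx) he, rfl⟩
    letI m : MetricSpace X := MetricSpace.ofDistTopology d hself hcomm htri H heq
    have hdist : ∀ x y : X, dist x y = d x y := fun _ _ => rfl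
    have hcs : CompactSpace X ↔ SeqCompactSpace X :=
      compactSpace_iff_seqCompactSpace
    rw [show coneTopology P p = τ from rfl] at *
    rw [hcs]
    constructor
    · intro hsc u
      obtain ⟨a, φ, hφ, htend⟩ := SeqCompactSpace.tendsto_subseq u
      refine ⟨a, φ, hφ, fun c hc => ?_⟩
      obtain ⟨δ, hδpos, hδ⟩ := exists_delta hP (e := e) hc
      obtain ⟨N, hN⟩ := Metric.tendsto_atTop.mp htend δ hδpos
      refine ⟨N, fun n hn => ?_⟩
      have h1 : δ • e - p ((u ∘ φ) n) a ∈ interior P := (hlt _ _ δ).mp (hN n hn)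
      show c - p ((u ∘ φ) n) a ∈ interior P
      have h2 : (c - δ • e) + (δ • e - p ((u ∘ φ) n) a) = c - p ((u ∘ φ) n) a := by abel
      rw [← h2]
      exact int_add_mem hP hδ (interior_subset h1)
    · intro hconv
      refine ⟨fun x _ => ?_⟩
      obtain ⟨a, φ, hφ, hcv⟩ := hconv x
      refine ⟨a, Set.mem_univ a, φ, hφ, Metric.tendsto_atTop.mpr fun ε hε => ?_⟩
      obtain ⟨N, hN⟩ := hcv (ε • e) (smul_int_mem hP hε he)
      exact ⟨N, fun n hn => (hlt _ _ ε).mpr (hN n hn)⟩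

end More


/-- `(X, τ_p)` is compact iff it is sequentially compact (every sequence has a
cone-convergent subsequence). -/
theorem stmt_9 {E X : Type*} [AddCommGroup E] [Module ℝ E] [TopologicalSpace E]
    [IsTopologicalAddGroup E] [ContinuousSMul ℝ E] [T2Space E] [Nonempty X]
    (P : Set E) (hP : IsTVSCone P) (p : X → X → E) (hp : IsConeMetric P p) :
    @CompactSpace X (coneTopology P p) ↔
      ∀ u : ℕ → X, ∃ a : X, ∃ φ : ℕ → ℕ, StrictMono φ ∧ ConeConverges P p (u ∘ φ) a := by
  exact stmt_9' hP p hp
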